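/- Let $A$ be a distributive Frobenius double algebra with antipode $S$ and dual basis $u_k\otimes_B v_k$ for $\Phi_B$. Then the left bialgebroid $(V, B, \Phi_L|_B, \Phi_R|_B, \Delta_B, \Phi_B)$ with $\Delta_B(a) = a\star u_k \otimes_B v_k$ satisfies the Hopf algebroid antipode axiom: $S(a_{(1)})_{(1)}\circ a_{(2)} \otimes_B S(a_{(1)})_{(2)} = e\otimes_B S(a)$ for all $a \in A$, where $a_{(1)}\otimes a_{(2)}$ denotes $\Delta_B(a)$. -/
import Mathlib


/-- A double algebra over a commutative ring `k`: a `k`-module `A` with two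
associative unital bilinear multiplications, the vertical `vmul` (written `∘` in the
paper, unit `e`) and the horizontal `hmul` (written `⋆`, unit `i`), satisfying
axioms A1–A8 of Szlachányi's Definition 1.1. -/
structure DoubleAlgebra (k : Type*) (A : Type*) [CommRing k] [AddCommGroup A]
    [Module k A] where
  vmul : A →ₗ[k] A →ₗ[k] A
  hmul : A →ₗ[k] A →ₗ[k] A
  e : A
  i : A
  vmul_assoc : ∀ a b c, vmul (vmul a b) c = vmul a (vmul b c)
  hmul_assoc : ∀ a b c, hmul (hmul a b) c = hmul a (hmul b c)
  vmul_e : ∀ a, vmul a e = a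
  e_vmul : ∀ a, vmul e a = a
  hmul_i : ∀ a, hmul a i = a
  i_hmul : ∀ a, hmul i a = a
  A1 : ∀ a b, vmul (hmul a e) b = hmul (vmul (hmul a e) i) b
  A2 : ∀ a b, vmul a (hmul b e) = hmul (vmul i (hmul b e)) a
  A3 : ∀ a b, hmul (vmul a i) b = vmul (hmul (vmul a i) e) b
  A4 : ∀ a b, hmul a (vmul b i) = vmul (hmul e (vmul b i)) a
  A5 : ∀ a b, vmul a (hmul e b) = hmul a (vmul i (hmul e b))
  A6 : ∀ a b, vmul (hmul e a) b = hmul b (vmul (hmul e a) i)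
  A7 : ∀ a b, hmul a (vmul i b) = vmul a (hmul e (vmul i b))
  A8 : ∀ a b, hmul (vmul i a) b = vmul b (hmul (vmul i a) e)

variable {k A : Type*} [CommRing k] [AddCommGroup A] [Module k A]

/-- `Φ_L(a) = a ⋆ e`. -/
def DoubleAlgebra.PhiL (D : DoubleAlgebra k A) (a : A) : A := D.hmul a D.e
/-- `Φ_R(a) = e ⋆ a`. -/
def DoubleAlgebra.PhiR (D : DoubleAlgebra k A) (a : A) : A := D.hmul D.e a
/-- `Φ_B(a) = a ∘ i`. -/
def DoubleAlgebra.PhiB (D : DoubleAlgebra k A) (a : A) : A := D.vmul a D.i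
/-- `Φ_T(a) = i ∘ a`. -/
def DoubleAlgebra.PhiT (D : DoubleAlgebra k A) (a : A) : A := D.vmul D.i a

/-- let `A` be a distributive Frobenius double algebra with antipode
`S` and dual basis `∑ uₖ ⊗_B vₖ` for `Φ_B`, so that `Δ_B(a) = ∑ (a ⋆ uₖ) ⊗_B vₖ`.
Then the Hopf algebroid antipode axiom `S(a₍₁₎)₍₁₎ ∘ a₍₂₎ ⊗_B S(a₍₁₎)₍₂₎ = e ⊗_B S(a)`
holds in `A ⊗_B A`: equality of the two sides is expressed by saying that every
`k`-bilinear, `B`-balanced map `β` takes the same value on them. -/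
theorem stmt19 (D : DoubleAlgebra k A)
    {ι : Type*} [Fintype ι] (u v : ι → A)
    -- `∑ uₖ ⊗_B vₖ` is a dual basis for the Frobenius homomorphism `Φ_B`
    (hdual₁ : ∀ a, ∑ m, D.hmul (D.PhiB (D.hmul a (u m))) (v m) = a)
    (hdual₂ : ∀ a, ∑ m, D.hmul (u m) (D.PhiB (D.hmul (v m) a)) = a)
    -- distributivity: `a ∘ (a' ⋆ a'') = (a₍₁₎ ∘ a') ⋆ (a₍₂₎ ∘ a'')`
    (hdistr : ∀ a a' a'', D.vmul a (D.hmul a' a'') =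
      ∑ m, D.hmul (D.vmul (D.hmul a (u m)) a') (D.vmul (v m) a''))
    -- the antipode `S`
    (S : A →ₗ[k] A) (hSbij : Function.Bijective S)
    (hSv : ∀ a a', S (D.vmul a a') = D.vmul (S a') (S a))
    (hSh : ∀ a a', S (D.hmul a a') = D.hmul (S a') (S a))
    (hSe : S D.e = D.e) (hSi : S D.i = D.i)
    (hSB : ∀ a a' a'', D.PhiB (D.hmul a' (D.vmul a'' a)) =
      D.PhiB (D.hmul (D.vmul a' (S a)) a''))
    (hSR : ∀ a a' a'', D.PhiR (D.vmul a' (D.hmul a a'')) =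
      D.PhiR (D.vmul (D.hmul (S a) a') a''))
    (hSL : ∀ a a' a'', D.PhiL (D.vmul (D.hmul a' a) a'') =
      D.PhiL (D.vmul a' (D.hmul a'' (S a))))
    (hST : ∀ a a' a'', D.PhiT (D.hmul (D.vmul a a') a'') =
      D.PhiT (D.hmul a' (D.vmul (S a) a''))) :
    ∀ (M : Type*) [AddCommGroup M] [Module k M] (β : A → A → M),
      (∀ x x' y, β (x + x') y = β x y + β x' y) →
      (∀ x y y', β x (y + y') = β x y + β x y') →
      (∀ (c : k) x y, β (c • x) y = c • β x y) →
      (∀ (c : k) x y, β x (c • y) = c • β x y) →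
      -- `β` is balanced over the bottom base algebra `B`
      (∀ x y b, b ∈ Set.range D.PhiB → β (D.hmul x b) y = β x (D.hmul b y)) →
      ∀ a : A,
        ∑ m, ∑ l, β (D.vmul (D.hmul (S (D.hmul a (u m))) (u l)) (v m)) (v l) =
          β D.e (S a) := by

  intro M _ _ β hβl hβr hβsl hβsr hbal a
  classical
  -- finite additivity of β in each slot
  have hβsum_l : ∀ (f : ι → A) (y : A), β (∑ m, f m) y = ∑ m, β (f m) y := fun f y =>
    map_sum (AddMonoidHom.mk' (fun x => β x y) fun a b => hβl a b y) f Finset.univ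
  have hβsum_r : ∀ (x : A) (f : ι → A), β x (∑ m, f m) = ∑ m, β x (f m) := fun x f =>
    map_sum (AddMonoidHom.mk' (fun y => β x y) fun a b => hβr x a b) f Finset.univ
  -- Φ_B commutes with finite sums
  have hPhiBsum : ∀ (f : ι → A), D.PhiB (∑ m, f m) = ∑ m, D.PhiB (f m) := by
    intro f
    simp only [DoubleAlgebra.PhiB]
    rw [map_sum D.vmul f Finset.univ, LinearMap.sum_apply]
  -- F1 : Φ_B(Φ_B(z) ⋆ y) = Φ_B(z) ⋆ Φ_B(y)   (via A3)
  have F1 : ∀ z y, D.PhiB (D.hmul (D.PhiB z) y) = D.hmul (D.PhiB z) (D.PhiB y) := by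
    intro z y
    simp only [DoubleAlgebra.PhiB]
    rw [D.A3 z y, D.vmul_assoc, ← D.A3]
  -- F2 : Φ_B(z ⋆ Φ_B(y)) = Φ_B(z) ⋆ Φ_B(y)   (via A4)
  have F2 : ∀ z y, D.PhiB (D.hmul z (D.PhiB y)) = D.hmul (D.PhiB z) (D.PhiB y) := by
    intro z y
    simp only [DoubleAlgebra.PhiB]
    rw [D.A4 z y, D.vmul_assoc, ← D.A4]
  -- (E) : ∑ₘ (p ∘ S(vₘ)) ⋆ (S(uₘ) ⋆ s) = Φ_L(p) ∘ s
  have hE : ∀ p s, (∑ m, D.hmul (D.vmul p (S (v m))) (D.hmul (S (u m)) s))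
      = D.vmul (D.hmul p D.e) s := by
    intro p s
    obtain ⟨b, rfl⟩ := hSbij.2 p
    obtain ⟨c, rfl⟩ := hSbij.2 s
    have h1 : ∀ m, D.hmul (D.vmul (S b) (S (v m))) (D.hmul (S (u m)) (S c))
        = S (D.hmul (D.hmul c (u m)) (D.vmul (v m) b)) := by
      intro m
      rw [hSh (D.hmul c (u m)) (D.vmul (v m) b), hSh c (u m), hSv (v m) b]
    rw [Finset.sum_congr rfl fun m _ => h1 m,
        ← map_sum S (fun m => D.hmul (D.hmul c (u m)) (D.vmul (v m) b)) Finset.univ]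
    have h2 : ∑ m, D.hmul (D.hmul c (u m)) (D.vmul (v m) b) = D.vmul c (D.hmul D.e b) := by
      rw [hdistr c D.e b]
      exact Finset.sum_congr rfl fun m _ => by rw [D.vmul_e]
    rw [h2, hSv c (D.hmul D.e b), hSh D.e b, hSe]
  -- Claim D : ∑ₘ (S(a ⋆ uₘ) ⋆ u_l) ∘ vₘ = e ⋆ Φ_B(S(a) ⋆ u_l)
  have hD : ∀ l, (∑ m, D.vmul (D.hmul (S (D.hmul a (u m))) (u l)) (v m))
      = D.hmul D.e (D.PhiB (D.hmul (S a) (u l))) := by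
    intro l
    have e2 : ∀ m, D.PhiB (D.hmul (v m) (D.vmul (D.hmul (S (D.hmul a (u m))) (u l)) (v m)))
        = D.PhiB (D.hmul (D.vmul (v m) (S (v m)))
            (D.hmul (S (u m)) (D.hmul (S a) (u l)))) := by
      intro m
      rw [hSB (v m) (v m) (D.hmul (S (D.hmul a (u m))) (u l)), hSh a (u m), D.hmul_assoc]
    have key : ∀ j,
        D.PhiB (D.hmul (v j) (∑ m, D.vmul (D.hmul (S (D.hmul a (u m))) (u l)) (v m)))
          = D.PhiB (D.hmul (v j) (D.hmul D.e (D.PhiB (D.hmul (S a) (u l))))) := by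
      intro j
      have e2' : ∀ m, D.PhiB (D.hmul (v j) (D.vmul (D.hmul (S (D.hmul a (u m))) (u l)) (v m)))
          = D.PhiB (D.hmul (D.vmul (v j) (S (v m)))
              (D.hmul (S (u m)) (D.hmul (S a) (u l)))) := by
        intro m
        rw [hSB (v m) (v j) (D.hmul (S (D.hmul a (u m))) (u l)), hSh a (u m), D.hmul_assoc]
      calc D.PhiB (D.hmul (v j) (∑ m, D.vmul (D.hmul (S (D.hmul a (u m))) (u l)) (v m)))
          = ∑ m, D.PhiB (D.hmul (v j)
              (D.vmul (D.hmul (S (D.hmul a (u m))) (u l)) (v m))) := by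
            rw [map_sum (D.hmul (v j)) _ Finset.univ, hPhiBsum _]
        _ = ∑ m, D.PhiB (D.hmul (D.vmul (v j) (S (v m)))
              (D.hmul (S (u m)) (D.hmul (S a) (u l)))) :=
            Finset.sum_congr rfl fun m _ => e2' m
        _ = D.PhiB (∑ m, D.hmul (D.vmul (v j) (S (v m)))
              (D.hmul (S (u m)) (D.hmul (S a) (u l)))) := (hPhiBsum _).symm
        _ = D.PhiB (D.vmul (D.hmul (v j) D.e) (D.hmul (S a) (u l))) := by
            rw [hE (v j) (D.hmul (S a) (u l))]
        _ = D.hmul (D.PhiB (D.hmul (v j) D.e)) (D.PhiB (D.hmul (S a) (u l))) := by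
            rw [D.A1 (v j) (D.hmul (S a) (u l))]
            exact F1 (D.hmul (v j) D.e) (D.hmul (S a) (u l))
        _ = D.PhiB (D.hmul (D.hmul (v j) D.e) (D.PhiB (D.hmul (S a) (u l)))) :=
            (F2 _ _).symm
        _ = D.PhiB (D.hmul (v j) (D.hmul D.e (D.PhiB (D.hmul (S a) (u l))))) := by
            rw [D.hmul_assoc]
    calc ∑ m, D.vmul (D.hmul (S (D.hmul a (u m))) (u l)) (v m)
        = ∑ j, D.hmul (u j) (D.PhiB (D.hmul (v j)
            (∑ m, D.vmul (D.hmul (S (D.hmul a (u m))) (u l)) (v m)))) := (hdual₂ _).symm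
      _ = ∑ j, D.hmul (u j) (D.PhiB (D.hmul (v j)
            (D.hmul D.e (D.PhiB (D.hmul (S a) (u l)))))) :=
          Finset.sum_congr rfl fun j _ => by rw [key j]
      _ = D.hmul D.e (D.PhiB (D.hmul (S a) (u l))) := hdual₂ _
  -- assemble
  calc ∑ m, ∑ l, β (D.vmul (D.hmul (S (D.hmul a (u m))) (u l)) (v m)) (v l)
      = ∑ l, ∑ m, β (D.vmul (D.hmul (S (D.hmul a (u m))) (u l)) (v m)) (v l) :=
        Finset.sum_comm
    _ = ∑ l, β (∑ m, D.vmul (D.hmul (S (D.hmul a (u m))) (u l)) (v m)) (v l) :=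
        Finset.sum_congr rfl fun l _ => (hβsum_l _ _).symm
    _ = ∑ l, β (D.hmul D.e (D.PhiB (D.hmul (S a) (u l)))) (v l) :=
        Finset.sum_congr rfl fun l _ => by rw [hD l]
    _ = ∑ l, β D.e (D.hmul (D.PhiB (D.hmul (S a) (u l))) (v l)) :=
        Finset.sum_congr rfl fun l _ => hbal D.e (v l) _ ⟨_, rfl⟩
    _ = β D.e (∑ l, D.hmul (D.PhiB (D.hmul (S a) (u l))) (v l)) := (hβsum_r _ _).symm
    _ = β D.e (S a) := by rw [hdual₁ (S a)]
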